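/- For a monotone nondecreasing sequence of events (E_n), P(limsup E_n) = 1 if and only if there exists a strictly increasing sequence (t_k) of positive integers with ∑_k P(E_{t_k} | complement of E_{t_{k-1}}) = ∞ (interpreting a term as +∞, or the condition as satisfied, when P(complement of E_{t_{k-1}}) = 0). -/

import Mathlib

open MeasureTheory Filter Set
open scoped ENNReal Topology ProbabilityTheory

private lemma limsup_eq_iUnion_of_mono {Ω : Type*} {E : ℕ → Set Ω} (hmono : Monotone E) :
    Filter.limsup E Filter.atTop = ⋃ n, E n := by
  rw [limsup_eq_iInf_iSup_of_nat]
  ext x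
  simp only [iInf_eq_iInter, iSup_eq_iUnion, mem_iInter, mem_iUnion, exists_prop, mem_iUnion]
  constructor
  · intro h
    obtain ⟨i, _, hi⟩ := h 0
    exact ⟨i, hi⟩
  · rintro ⟨i, hi⟩ n
    exact ⟨max i n, le_max_right _ _, hmono (le_max_left _ _) hi⟩

theorem stmt5 {Ω : Type*} [MeasurableSpace Ω] (μ : Measure Ω) [IsProbabilityMeasure μ]
    (E : ℕ → Set Ω) (hE : ∀ n, MeasurableSet (E n)) (hE0 : E 0 = ∅)
    (hmono : Monotone E) :
    μ (Filter.limsup E Filter.atTop) = 1 ↔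
      ∃ t : ℕ → ℕ, t 0 = 0 ∧ StrictMono t ∧
        ((∃ k, μ ((E (t k))ᶜ) = 0) ∨
          ∑' k : ℕ, μ[E (t (k + 1)) | (E (t k))ᶜ] = ∞) := by
  rw [limsup_eq_iUnion_of_mono hmono]
  constructor
  · intro h
    by_cases hA : ∃ n, μ ((E n)ᶜ) = 0
    · obtain ⟨n, hn⟩ := hA
      have hn0 : n ≠ 0 := by
        intro h0
        rw [h0, hE0, Set.compl_empty, measure_univ] at hn
        exact one_ne_zero hn
      refine ⟨fun k => n * k, mul_zero n, ?_, Or.inl ⟨1, by simpa using hn⟩⟩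
      apply strictMono_nat_of_lt_succ
      intro k
      have : 0 < n := Nat.pos_of_ne_zero hn0
      calc n * k < n * k + n := by omega
        _ = n * (k + 1) := by ring
    · push_neg at hA
      -- key recursive step
      have key : ∀ m : ℕ, ∃ n : ℕ, m < n ∧ μ ((E n)ᶜ) ≤ μ ((E m)ᶜ) / 2 := by
        intro m
        have hsup : ⨆ n, μ (E n) = 1 := by
          rw [← Directed.measure_iUnion hmono.directed_le, h]
        have hhalf : μ ((E m)ᶜ) / 2 ≠ 0 := by
          simp [ENNReal.div_eq_top, hA m]
        have hlt : (1 : ℝ≥0∞) - μ ((E m)ᶜ) / 2 < ⨆ n, μ (E n) := by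
          rw [hsup]
          exact ENNReal.sub_lt_self ENNReal.one_ne_top one_ne_zero hhalf
        obtain ⟨n0, hn0⟩ := lt_iSup_iff.mp hlt
        refine ⟨max n0 (m + 1), lt_of_lt_of_le (Nat.lt_succ_self m) (le_max_right _ _), ?_⟩
        have h1 : μ ((E (max n0 (m + 1)))ᶜ) ≤ μ ((E n0)ᶜ) :=
          measure_mono (compl_subset_compl.mpr (hmono (le_max_left _ _)))
        refine h1.trans ?_
        rw [prob_compl_eq_one_sub (hE n0)]
        rw [tsub_le_iff_right]
        calc (1 : ℝ≥0∞) = 1 - μ ((E m)ᶜ) / 2 + μ ((E m)ᶜ) / 2 := by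
              refine (tsub_add_cancel_of_le ?_).symm
              calc μ ((E m)ᶜ) / 2 ≤ 1 / 2 := by
                    gcongr
                    exact prob_le_one
                _ ≤ 1 := ENNReal.half_le_self
          _ ≤ μ (E n0) + μ ((E m)ᶜ) / 2 := add_le_add_left hn0.le _
          _ = μ ((E m)ᶜ) / 2 + μ (E n0) := add_comm _ _
      choose f hf1 hf2 using key
      set t : ℕ → ℕ := fun k => Nat.rec 0 (fun _ x => f x) k with ht_def
      have ht0 : t 0 = 0 := rfl
      have htsucc : ∀ k, t (k + 1) = f (t k) := fun k => rfl
      have htS : StrictMono t := strictMono_nat_of_lt_succ fun k => by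
        rw [htsucc]; exact hf1 (t k)
      refine ⟨t, ht0, htS, Or.inr ?_⟩
      have hterm : ∀ k, (2 : ℝ≥0∞)⁻¹ ≤ μ[E (t (k + 1)) | (E (t k))ᶜ] := by
        intro k
        rw [ProbabilityTheory.cond_apply (hE (t k)).compl]
        have hq2 : μ ((E (t (k + 1)))ᶜ) ≤ μ ((E (t k))ᶜ) / 2 := by
          rw [htsucc]; exact hf2 (t k)
        have hsubset : (E (t k))ᶜ ⊆ ((E (t k))ᶜ ∩ E (t (k + 1))) ∪ (E (t (k + 1)))ᶜ := by
          intro x hx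
          by_cases hx2 : x ∈ E (t (k + 1))
          · exact Or.inl ⟨hx, hx2⟩
          · exact Or.inr hx2
        have hle : μ ((E (t k))ᶜ) ≤ μ ((E (t k))ᶜ ∩ E (t (k + 1))) + μ ((E (t (k + 1)))ᶜ) :=
          (measure_mono hsubset).trans (measure_union_le _ _)
        have hge : μ ((E (t k))ᶜ) / 2 ≤ μ ((E (t k))ᶜ ∩ E (t (k + 1))) := by
          rw [← ENNReal.sub_half (measure_ne_top μ _)]
          rw [tsub_le_iff_right]
          exact hle.trans (by gcongr)
        calc (2 : ℝ≥0∞)⁻¹ = (μ ((E (t k))ᶜ))⁻¹ * (μ ((E (t k))ᶜ) / 2) := by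
              rw [div_eq_mul_inv, ← mul_assoc,
                ENNReal.inv_mul_cancel (hA _) (measure_ne_top μ _), one_mul]
          _ ≤ (μ ((E (t k))ᶜ))⁻¹ * μ ((E (t k))ᶜ ∩ E (t (k + 1))) := by gcongr
      have : (⊤ : ℝ≥0∞) = ∑' _ : ℕ, (2 : ℝ≥0∞)⁻¹ :=
        (ENNReal.tsum_const_eq_top_of_ne_zero (by norm_num)).symm
      refine top_le_iff.mp ?_
      rw [this]
      exact ENNReal.tsum_le_tsum hterm
  · rintro ⟨t, ht0, htS, hcase | hsum⟩
    · obtain ⟨k, hk⟩ := hcase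
      have h1 : μ (E (t k)) = 1 := (prob_compl_eq_zero_iff (hE _)).mp hk
      refine le_antisymm prob_le_one ?_
      rw [← h1]
      exact measure_mono (subset_iUnion E (t k))
    · by_contra hne
      have hlt : μ (⋃ n, E n) < 1 := lt_of_le_of_ne prob_le_one hne
      set ε : ℝ≥0∞ := 1 - μ (⋃ n, E n) with hε_def
      have hε0 : ε ≠ 0 := by
        simp only [hε_def]
        exact (tsub_pos_iff_lt.mpr hlt).ne'
      have hεle : ∀ n, ε ≤ μ ((E n)ᶜ) := by
        intro n
        rw [prob_compl_eq_one_sub (hE n)]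
        exact tsub_le_tsub_left (measure_mono (subset_iUnion E n)) 1
      set D : ℕ → Set Ω := fun k => E (t (k + 1)) \ E (t k) with hD_def
      have hterm : ∀ k, μ[E (t (k + 1)) | (E (t k))ᶜ] ≤ ε⁻¹ * μ (D k) := by
        intro k
        rw [ProbabilityTheory.cond_apply (hE (t k)).compl]
        have hset : (E (t k))ᶜ ∩ E (t (k + 1)) = D k := by
          show _ = E (t (k + 1)) \ E (t k)
          rw [Set.diff_eq, Set.inter_comm]
        rw [hset]
        exact mul_le_mul_left (ENNReal.inv_le_inv' (hεle (t k))) _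
      have hdisj : Pairwise (Function.onFun Disjoint D) := by
        have key2 : ∀ i j, i < j → Disjoint (D i) (D j) := by
          intro i j hij
          rw [Set.disjoint_left]
          intro x hx1 hx2
          exact hx2.2 (hmono (htS.monotone (Nat.succ_le_of_lt hij)) hx1.1)
        intro i j hij
        rcases hij.lt_or_gt with h' | h'
        · exact key2 _ _ h'
        · exact (key2 _ _ h').symm
      have hDsum : ∑' k, μ (D k) ≤ 1 := by
        have := tsum_measure_le_measure_univ (μ := μ)
          (fun k => ((hE (t (k + 1))).diff (hE (t k))).nullMeasurableSet)
          (fun i j hij => (hdisj hij).aedisjoint)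
        simpa using this
      have : (∞ : ℝ≥0∞) ≤ ε⁻¹ := by
        calc (∞ : ℝ≥0∞) = ∑' k : ℕ, μ[E (t (k + 1)) | (E (t k))ᶜ] := hsum.symm
          _ ≤ ∑' k, ε⁻¹ * μ (D k) := ENNReal.tsum_le_tsum hterm
          _ = ε⁻¹ * ∑' k, μ (D k) := ENNReal.tsum_mul_left
          _ ≤ ε⁻¹ * 1 := by gcongr
          _ = ε⁻¹ := mul_one _
      exact (ENNReal.inv_ne_top.mpr hε0) (top_le_iff.mp this)
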